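/- arXiv:2511.12736 — 7 statements merged into one kernel-verified Lean document; each statement's English description precedes it below -/
import Mathlib

section
/- Let T be a tree of height ω₁ and let S ⊆ T be an arbitrary subset, regarded as a tree with the order inherited from T. Then NS^S ⊆ (NS^T)↾S; that is, every B ⊆ S with B ∈ NS^S satisfies B ∈ NS^T. -/
open Set

/-- The first uncountable ordinal `ω₁`. -/
noncomputable def omega1 : Ordinal := Ordinal.omega 1

section TreeDefs

variable {T : Type*} [PartialOrder T]

/-- In a tree, the set of strict predecessors of any node is linearly ordered. -/
def PredsChain (T : Type*) [PartialOrder T] : Prop :=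
  ∀ t : T, IsChain (· ≤ ·) {s : T | s < t}

/-- `ht` is *the* height function of the tree: it is strictly monotone on comparable pairs and
the heights of the strict predecessors of `t` are exactly the ordinals below `ht t`; together
with `PredsChain` this says that the set `t↓` of strict predecessors of `t` is well-ordered
with order type `ht t`. -/
def IsHeightFun (ht : T → Ordinal) : Prop :=
  (∀ s t : T, s < t → ht s < ht t) ∧
  ∀ t : T, ∀ o : Ordinal, o < ht t → ∃ s : T, s < t ∧ ht s = o

/-- The tree has height `ω₁`: every node has height `< ω₁` and every countable ordinal is the
height of some node. -/
def HeightOmega1 (ht : T → Ordinal) : Prop :=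
  (∀ t : T, ht t < omega1) ∧ ∀ o : Ordinal, o < omega1 → ∃ t : T, ht t = o

/-- All levels of the tree are countable. -/
def CountableLevels (ht : T → Ordinal) : Prop :=
  ∀ o : Ordinal, {t : T | ht t = o}.Countable

/-- A tree of height `ω₁` is well-pruned if every node has successors in all later levels. -/
def WellPruned (ht : T → Ordinal) : Prop :=
  ∀ o o' : Ordinal, o < o' → o' < omega1 →
    ∀ s : T, ht s = o → ∃ t : T, s < t ∧ ht t = o'

/-- A special subset of a tree: a union of countably many antichains. -/
def IsSpecialSet (U : Set T) : Prop :=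
  ∃ A : ℕ → Set T, (∀ n : ℕ, IsAntichain (· ≤ ·) (A n)) ∧ U ⊆ ⋃ n, A n

/-- Membership in the ideal `NS^T`: there is a regressive map on `B` all of whose fibers
are special. -/
def InNS [OrderBot T] (B : Set T) : Prop :=
  ∃ f : T → T, (∀ t ∈ B, t ≠ ⊥ → f t < t) ∧
    ∀ t : T, IsSpecialSet {s : T | s ∈ B ∧ f s = t}

/-- The diamond principle `◊_T` for a tree `T`. -/
def DiamondTree (T : Type*) [PartialOrder T] [OrderBot T] : Prop :=
  ∃ D : T → Set T, (∀ t : T, D t ⊆ Set.Iio t) ∧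
    ∀ X : Set T, ¬ InNS {t : T | X ∩ Set.Iio t = D t}

end TreeDefs

/-- Club subsets of `ω₁`: closed and unbounded in `ω₁`. -/
def IsClubIn (C : Set Ordinal) : Prop :=
  C ⊆ Set.Iio omega1 ∧
  (∀ o : Ordinal, o < omega1 → ∃ b ∈ C, o < b) ∧
  ∀ o : Ordinal, o < omega1 → (C ∩ Set.Iio o).Nonempty →
    IsLUB (C ∩ Set.Iio o) o → o ∈ C

/-- Stationary subsets of `ω₁`: sets meeting every club. -/
def IsStationaryIn (S : Set Ordinal) : Prop :=
  ∀ C : Set Ordinal, IsClubIn C → (S ∩ C).Nonempty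

/-- The diamond principle `◊(S)` for `S ⊆ ω₁`;  `◊` is `DiamondOn (Set.Iio omega1)`. -/
def DiamondOn (S : Set Ordinal) : Prop :=
  ∃ D : Ordinal → Set Ordinal, (∀ o ∈ S, D o ⊆ Set.Iio o) ∧
    ∀ X : Set Ordinal, X ⊆ Set.Iio omega1 →
      IsStationaryIn {o ∈ S | X ∩ Set.Iio o = D o}

/-- Membership in the ideal `NS^S`, where `S ⊆ T` is regarded as a tree with the order
inherited from `T`: there is a map `g : B → S` with `g s < s` for every `s ∈ B` that is not
minimal in `S`, all of whose fibers are special. -/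
def InNSOfSubset {T : Type*} [PartialOrder T] (S B : Set T) : Prop :=
  ∃ g : T → T, (∀ s ∈ B, g s ∈ S) ∧
    (∀ s ∈ B, (∃ u ∈ S, u < s) → g s < s) ∧
    ∀ t : T, IsSpecialSet {s : T | s ∈ B ∧ g s = t}

/-- If `T` is a tree of height `ω₁` and `S ⊆ T` is an arbitrary subset,
regarded as a tree with the inherited order, then `NS^S ⊆ (NS^T) ↾ S`. -/
theorem stmt0 {T : Type*} [PartialOrder T] [OrderBot T]
    (hchain : PredsChain T) (ht : T → Ordinal)
    (hht : IsHeightFun ht) (hΩ : HeightOmega1 ht)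
    (S B : Set T) (hBS : B ⊆ S) (hB : InNSOfSubset S B) :
    InNS B := by
  classical
  obtain ⟨g, hgS, hglt, hgfib⟩ := hB
  refine ⟨fun s => if ∃ u ∈ S, u < s then g s else ⊥, ?_, ?_⟩
  · intro t htB htne
    by_cases h : ∃ u ∈ S, u < t
    · simpa [h] using hglt t htB h
    · simp only [h, if_false]
      exact Ne.bot_lt htne
  · intro t
    by_cases hbot : t = ⊥
    · subst hbot
      obtain ⟨A, hA, hAsub⟩ := hgfib ⊥
      refine ⟨fun n => match n with
        | 0 => {s : T | s ∈ B ∧ ¬∃ u ∈ S, u < s}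
        | n+1 => A n, ?_, ?_⟩
      · intro n
        match n with
        | 0 =>
          intro a ha b hb hne hab
          exact hb.2 ⟨a, hBS ha.1, lt_of_le_of_ne hab hne⟩
        | n+1 => exact hA n
      · intro s hs
        obtain ⟨hsB, hf⟩ := hs
        by_cases h : ∃ u ∈ S, u < s
        · simp only [h, if_true] at hf
          have : s ∈ ⋃ n, A n := hAsub ⟨hsB, hf⟩
          obtain ⟨n, hn⟩ := Set.mem_iUnion.mp this
          exact Set.mem_iUnion.mpr ⟨n+1, hn⟩
        · exact Set.mem_iUnion.mpr ⟨0, ⟨hsB, h⟩⟩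
    · obtain ⟨A, hA, hAsub⟩ := hgfib t
      refine ⟨A, hA, fun s hs => ?_⟩
      obtain ⟨hsB, hf⟩ := hs
      by_cases h : ∃ u ∈ S, u < s
      · simp only [h, if_true] at hf
        exact hAsub ⟨hsB, hf⟩
      · simp only [h, if_false] at hf
        exact absurd hf.symm hbot
end

section
/- Let T be a tree of height ω₁ and let S be a subtree of T (a downward-closed subset). Then NS^S = (NS^T)↾S; that is, for every B ⊆ S one has B ∈ NS^S if and only if B ∈ NS^T. -/
open Set

/-- If `T` is a tree of height `ω₁` and `S` is a subtree of `T`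
(a downward-closed subset), then `NS^S = (NS^T) ↾ S`: for every `B ⊆ S`,
`B ∈ NS^S` if and only if `B ∈ NS^T`. -/
theorem stmt1 {T : Type*} [PartialOrder T] [OrderBot T]
    (hchain : PredsChain T) (ht : T → Ordinal)
    (hht : IsHeightFun ht) (hΩ : HeightOmega1 ht)
    (S : Set T) (hS : ∀ s t : T, s ≤ t → t ∈ S → s ∈ S)
    (B : Set T) (hBS : B ⊆ S) :
    InNSOfSubset S B ↔ InNS B := by
  classical
  constructor
  · rintro ⟨g, hgS, hglt, hgsp⟩
    refine ⟨g, ?_, hgsp⟩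
    intro t htB htne
    exact hglt t htB ⟨⊥, hS ⊥ t bot_le (hBS htB), bot_lt_iff_ne_bot.mpr htne⟩
  · rintro ⟨f, hflt, hfsp⟩
    refine ⟨fun s => if s ∈ B ∧ s ≠ ⊥ then f s else s, ?_, ?_, ?_⟩
    · intro s hsB
      by_cases h : s = ⊥
      · simpa [h] using hBS hsB
      · simp only [hsB, h, and_self, ne_eq, not_false_iff, if_true]
        exact hS (f s) s (le_of_lt (hflt s hsB h)) (hBS hsB)
    · rintro s hsB ⟨u, _, hus⟩
      have hne : s ≠ ⊥ := by
        rintro rfl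
        exact absurd hus (not_lt_bot)
      simp only [hsB, hne, and_self, ne_eq, not_false_iff, if_true]
      exact hflt s hsB hne
    · intro t
      obtain ⟨A, hA, hsub⟩ := hfsp t
      refine ⟨fun n => Nat.rec {t} (fun n _ => A n) n, ?_, ?_⟩
      · intro n
        cases n with
        | zero => exact Set.subsingleton_singleton.isAntichain _
        | succ n => exact hA n
      · intro s hs
        obtain ⟨hsB, hst⟩ := hs
        by_cases h : s = ⊥
        · simp only [hsB, h, and_self, ne_eq, not_true, if_neg, and_false,
            if_false] at hst
          exact Set.mem_iUnion.mpr ⟨0, show s ∈ ({t} : Set T) by rw [h, hst]; exact Set.mem_singleton t⟩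
        · simp only [hsB, h, and_self, ne_eq, not_false_iff, if_true] at hst
          obtain ⟨n, hn⟩ := Set.mem_iUnion.mp (hsub ⟨hsB, hst⟩)
          exact Set.mem_iUnion.mpr ⟨n + 1, hn⟩
end

section
/- Let T be a nonspecial ω₁-tree and let S ⊆ ω₁ be such that T↾S ∈ NS^T. Then ◊_T implies ◊(ω₁ ∖ S); in particular, if ◊_T holds then ω₁ ∖ S is stationary. -/
open Set

section Aux

open Ordinal Cardinal

/-! ### Basic facts about `omega1` -/

theorem lt_omega1_iff {o : Ordinal} : o < omega1 ↔ o.card ≤ ℵ₀ := by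
  rw [omega1, ← Cardinal.ord_aleph, Cardinal.lt_ord, ← Cardinal.succ_aleph0,
    Order.lt_succ_iff]

theorem nat_lt_omega1' (n : ℕ) : (n : Ordinal) < omega1 :=
  lt_omega1_iff.2 (by rw [Ordinal.card_nat]; exact (Cardinal.nat_lt_aleph0 n).le)

theorem omega0_lt_omega1' : (Ordinal.omega0 : Ordinal) < omega1 :=
  lt_omega1_iff.2 (by simp [Ordinal.card_omega0])

theorem add_lt_omega1' {a b : Ordinal} (ha : a < omega1) (hb : b < omega1) :
    a + b < omega1 := by
  rw [lt_omega1_iff] at ha hb ⊢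
  rw [Ordinal.card_add]
  exact (Cardinal.add_le_aleph0).2 ⟨ha, hb⟩

theorem omega0_mul_lt_omega1' {a : Ordinal} (ha : a < omega1) :
    Ordinal.omega0 * a < omega1 := by
  rw [lt_omega1_iff] at ha ⊢
  rw [Ordinal.card_mul, Ordinal.card_omega0]
  calc ℵ₀ * a.card ≤ ℵ₀ * ℵ₀ := mul_le_mul' le_rfl ha
    _ = ℵ₀ := Cardinal.aleph0_mul_aleph0

theorem code_lt_omega1 {ξ : Ordinal} (h : ξ < omega1) (n : ℕ) :
    Ordinal.omega0 * ξ + n < omega1 :=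
  add_lt_omega1' (omega0_mul_lt_omega1' h) (nat_lt_omega1' n)

theorem succ_lt_omega1 {o : Ordinal} (h : o < omega1) : o + 1 < omega1 :=
  add_lt_omega1' h (by simpa using nat_lt_omega1' 1)

theorem countable_Iio_omega1 {o : Ordinal} (h : o < omega1) :
    (Set.Iio o).Countable := by
  rw [← Cardinal.le_aleph0_iff_set_countable]
  rw [Ordinal.mk_Iio_ordinal o]
  exact Cardinal.lift_le_aleph0.mpr (lt_omega1_iff.1 h)

theorem countable_Iic_omega1 {o : Ordinal} (h : o < omega1) :
    (Set.Iic o).Countable :=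
  (countable_Iio_omega1 (succ_lt_omega1 h)).mono
    (fun x hx => lt_of_le_of_lt hx (lt_add_of_pos_right o zero_lt_one))

theorem iSup_lt_omega1 (f : ℕ → Ordinal) (h : ∀ n, f n < omega1) :
    iSup f < omega1 := by
  have : omega1 = (Cardinal.aleph 1).ord := (Cardinal.ord_aleph 1).symm
  rw [this] at *
  exact lt_of_lt_of_eq (Ordinal.iSup_lt_omega_one (fun n => by simpa [omega1] using h n)) (Cardinal.ord_aleph 1).symm

/-! ### Coding of pairs -/

theorem code_le (ξ : Ordinal) (n : ℕ) : ξ ≤ Ordinal.omega0 * ξ + n :=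
  le_trans (Ordinal.le_mul_right ξ Ordinal.omega0_pos) (le_add_right le_rfl)

theorem code_inj {ξ ξ' : Ordinal} {n n' : ℕ}
    (h : Ordinal.omega0 * ξ + n = Ordinal.omega0 * ξ' + n') : ξ = ξ' ∧ n = n' := by
  have hξ : ξ = ξ' := by
    have h2 := congrArg (· / Ordinal.omega0) h
    simpa [Ordinal.mul_add_div _ Ordinal.omega0_ne_zero,
      Ordinal.div_eq_zero_of_lt (Ordinal.nat_lt_omega0 _)] using h2
  subst hξ
  refine ⟨rfl, ?_⟩
  have : (n : Ordinal) = n' := add_left_cancel_iff.1 h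
  exact_mod_cast this

/-! ### Special sets and the ideal `NS` -/

section TreeAux

variable {T : Type*} [PartialOrder T]

theorem special_mono {U V : Set T} (hUV : U ⊆ V) (hV : IsSpecialSet V) :
    IsSpecialSet U := by
  obtain ⟨A, hA, hcov⟩ := hV
  exact ⟨A, hA, hUV.trans hcov⟩

theorem special_union {U V : Set T} (hU : IsSpecialSet U) (hV : IsSpecialSet V) :
    IsSpecialSet (U ∪ V) := by
  classical
  obtain ⟨A, hA, hAcov⟩ := hU
  obtain ⟨B, hB, hBcov⟩ := hV
  refine ⟨fun n => if n % 2 = 0 then A (n / 2) else B (n / 2), fun n => ?_, ?_⟩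
  · by_cases h : n % 2 = 0 <;> simp [h, hA, hB]
  · rintro x (hx | hx)
    · obtain ⟨s, ⟨n, rfl⟩, hs⟩ := hAcov hx
      refine Set.mem_iUnion.2 ⟨2 * n, ?_⟩
      have h1 : (2 * n) % 2 = 0 := by omega
      have h2 : (2 * n) / 2 = n := by omega
      simp [h1, h2, hs]
    · obtain ⟨s, ⟨n, rfl⟩, hs⟩ := hBcov hx
      refine Set.mem_iUnion.2 ⟨2 * n + 1, ?_⟩
      have h1 : ¬ ((2 * n + 1) % 2 = 0) := by omega
      have h2 : (2 * n + 1) / 2 = n := by omega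
      simp [h1, h2, hs]

theorem countable_special {U : Set T} (h : U.Countable) : IsSpecialSet U := by
  rcases U.eq_empty_or_nonempty with rfl | hne
  · exact ⟨fun _ => ∅, fun n => by simp [IsAntichain, Set.pairwise_empty], by simp⟩
  · obtain ⟨g, hg⟩ := h.exists_eq_range hne
    refine ⟨fun n => {g n}, fun n => Set.pairwise_singleton _ _, ?_⟩
    rw [hg, ← Set.iUnion_singleton_eq_range]

theorem inNS_mono [OrderBot T] {B B' : Set T} (hBB : B ⊆ B') (h : InNS B') :
    InNS B := by
  obtain ⟨f, hreg, hfib⟩ := h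
  refine ⟨f, fun t htB => hreg t (hBB htB), fun t => ?_⟩
  apply special_mono _ (hfib t)
  intro s hs
  exact ⟨hBB hs.1, hs.2⟩

theorem inNS_union [OrderBot T] {B₁ B₂ : Set T} (h1 : InNS B₁) (h2 : InNS B₂) :
    InNS (B₁ ∪ B₂) := by
  classical
  obtain ⟨f, hf, hffib⟩ := h1
  obtain ⟨g, hg, hgfib⟩ := h2
  refine ⟨fun t => if t ∈ B₁ then f t else g t, ?_, ?_⟩
  · rintro t (htB | htB) hne
    · simp only [htB, if_pos]
      exact hf t htB hne
    · by_cases h : t ∈ B₁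
      · simp only [h, if_pos]; exact hf t h hne
      · simp only [h, if_neg, if_false]; exact hg t htB hne
  · intro u
    apply special_mono _ (special_union (hffib u) (hgfib u))
    rintro s ⟨hsB, hseq⟩
    by_cases h : s ∈ B₁
    · exact Or.inl ⟨h, by simpa [h] using hseq⟩
    · exact Or.inr ⟨hsB.resolve_left h, by simpa [h] using hseq⟩

variable {ht : T → Ordinal}

theorem countable_height_le (hlev : CountableLevels ht) {β : Ordinal}
    (hβ : β < omega1) : {t : T | ht t ≤ β}.Countable := by
  have : {t : T | ht t ≤ β} = ⋃ o ∈ Set.Iic β, {t : T | ht t = o} := by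
    ext t; simp [Set.mem_iUnion]
  rw [this]
  exact Set.Countable.biUnion (countable_Iic_omega1 hβ) (fun o _ => hlev o)

theorem club_avoid_inNS [OrderBot T] (hht : IsHeightFun ht) (hΩ : HeightOmega1 ht)
    (hlev : CountableLevels ht) {C : Set Ordinal} (hC : IsClubIn C) :
    InNS {t : T | ht t ∉ C} := by
  classical
  have key : ∀ t : T, ht t ∉ C → (C ∩ Set.Iio (ht t)).Nonempty →
      sSup (C ∩ Set.Iio (ht t)) < ht t := by
    intro t htC hne
    have hbdd : BddAbove (C ∩ Set.Iio (ht t)) := ⟨ht t, fun x hx => hx.2.le⟩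
    have hle : sSup (C ∩ Set.Iio (ht t)) ≤ ht t := csSup_le hne (fun x hx => hx.2.le)
    rcases lt_or_eq_of_le hle with h | h
    · exact h
    · exfalso
      apply htC
      have hlub := isLUB_csSup hne hbdd
      rw [h] at hlub
      exact hC.2.2 (ht t) (hΩ.1 t) hne hlub
  let f : T → T := fun t =>
    if h : ht t ∉ C ∧ (C ∩ Set.Iio (ht t)).Nonempty then
      (hht.2 t (sSup (C ∩ Set.Iio (ht t))) (key t h.1 h.2)).choose
    else ⊥
  have hfspec : ∀ t : T, ∀ h : ht t ∉ C ∧ (C ∩ Set.Iio (ht t)).Nonempty,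
      f t < t ∧ ht (f t) = sSup (C ∩ Set.Iio (ht t)) := by
    intro t h
    simp only [f, dif_pos h]
    exact (hht.2 t (sSup (C ∩ Set.Iio (ht t))) (key t h.1 h.2)).choose_spec
  refine ⟨f, ?_, ?_⟩
  · intro t htB hne
    by_cases h : ht t ∉ C ∧ (C ∩ Set.Iio (ht t)).Nonempty
    · exact (hfspec t h).1
    · simp only [f, dif_neg h]
      exact Ne.bot_lt hne
  · intro s
    -- bound the fiber
    obtain ⟨b, hbC, hsb⟩ := hC.2.1 (ht s) (hΩ.1 s)
    set β := sInf {c : Ordinal | c ∈ C ∧ ht s < c} with hβdef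
    have hβmem : β ∈ {c : Ordinal | c ∈ C ∧ ht s < c} := csInf_mem ⟨b, hbC, hsb⟩
    have hβω : β < omega1 := hC.1 hβmem.1
    apply countable_special
    apply (countable_height_le hlev hβω).mono
    rintro t ⟨htB, hft⟩
    simp only [Set.mem_setOf_eq] at htB ⊢
    by_cases h : ht t ∉ C ∧ (C ∩ Set.Iio (ht t)).Nonempty
    · have hspec := hfspec t h
      rw [hft] at hspec
      by_contra hcon
      push_neg at hcon
      have hβin : β ∈ C ∩ Set.Iio (ht t) := ⟨hβmem.1, hcon⟩
      have : β ≤ sSup (C ∩ Set.Iio (ht t)) :=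
        le_csSup ⟨ht t, fun x hx => hx.2.le⟩ hβin
      rw [← hspec.2] at this
      exact absurd hβmem.2 (not_lt.2 this)
    · have hemp : ¬ (C ∩ Set.Iio (ht t)).Nonempty := by
        intro hne; exact h ⟨htB, hne⟩
      by_contra hcon
      push_neg at hcon
      exact hemp ⟨β, hβmem.1, hcon⟩

theorem exists_height_in_club [OrderBot T] (hht : IsHeightFun ht)
    (hΩ : HeightOmega1 ht) (hlev : CountableLevels ht) {B : Set T}
    (hB : ¬ InNS B) {C : Set Ordinal} (hC : IsClubIn C) :
    ∃ t ∈ B, ht t ∈ C := by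
  by_contra h
  push_neg at h
  exact hB (inNS_mono (fun t htB => h t htB) (club_avoid_inNS hht hΩ hlev hC))

theorem exists_level_enum (hΩ : HeightOmega1 ht) (hlev : CountableLevels ht)
    [OrderBot T] :
    ∃ e : Ordinal → ℕ → T, ∀ o, o < omega1 → ∀ t : T, ht t = o → ∃ n, e o n = t := by
  classical
  have h : ∀ o : Ordinal, o < omega1 → ∃ g : ℕ → T, {t : T | ht t = o} = Set.range g := by
    intro o ho
    obtain ⟨t₀, ht₀⟩ := hΩ.2 o ho
    exact (hlev o).exists_eq_range ⟨t₀, ht₀⟩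
  refine ⟨fun o => if ho : o < omega1 then (h o ho).choose else fun _ => ⊥, ?_⟩
  intro o ho t htlev
  simp only [dif_pos ho]
  have := (h o ho).choose_spec
  have : t ∈ Set.range (h o ho).choose := this ▸ htlev
  obtain ⟨n, hn⟩ := this
  exact ⟨n, hn⟩

end TreeAux

/-! ### Clubs -/

theorem isClubIn_iInter {f : ℕ → Set Ordinal} (h : ∀ n, IsClubIn (f n)) :
    IsClubIn (⋂ n, f n) := by
  classical
  refine ⟨fun x hx => (h 0).1 (Set.mem_iInter.1 hx 0), ?_, ?_⟩
  · -- unbounded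
    intro a ha
    have hnxt : ∀ n : ℕ, ∀ x : Ordinal, x < omega1 → ∃ b, b ∈ f n ∧ x < b := by
      intro n x hx
      obtain ⟨b, hb, hxb⟩ := (h n).2.1 x hx
      exact ⟨b, hb, hxb⟩
    let nxt : ℕ → Ordinal → Ordinal := fun n x =>
      if hx : x < omega1 then (hnxt n x hx).choose else 0
    have hnxt_spec : ∀ n x, x < omega1 → nxt n x ∈ f n ∧ x < nxt n x := by
      intro n x hx
      simp only [nxt, dif_pos hx]
      exact (hnxt n x hx).choose_spec
    let r : ℕ → Ordinal := fun j => Nat.rec a (fun j x => nxt (Nat.unpair j).1 x) j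
    have hr0 : r 0 = a := rfl
    have hrsucc : ∀ j, r (j + 1) = nxt (Nat.unpair j).1 (r j) := fun j => rfl
    have hrlt : ∀ j, r j < omega1 := by
      intro j
      induction j with
      | zero => exact ha
      | succ j ih =>
        rw [hrsucc]
        exact (h _).1 (hnxt_spec _ _ ih).1
    have hrmono : StrictMono r := by
      apply strictMono_nat_of_lt_succ
      intro j
      rw [hrsucc]
      exact (hnxt_spec _ _ (hrlt j)).2
    set o : Ordinal := ⨆ j, r j with ho_def
    have hoω : o < omega1 := iSup_lt_omega1 r hrlt
    have hrle : ∀ j, r j ≤ o := fun j => Ordinal.le_iSup r j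
    have hrlto : ∀ j, r j < o := fun j =>
      lt_of_lt_of_le (hrmono (Nat.lt_succ_self j)) (hrle (j + 1))
    have hstep : ∀ n j, r (Nat.pair n j + 1) ∈ f n := by
      intro n j
      have heq : r (Nat.pair n j + 1) = nxt n (r (Nat.pair n j)) := by
        rw [hrsucc, Nat.unpair_pair]
      rw [heq]
      exact (hnxt_spec n _ (hrlt _)).1
    have hmem : ∀ n, o ∈ f n := by
      intro n
      have hne : (f n ∩ Set.Iio o).Nonempty :=
        ⟨r (Nat.pair n 0 + 1), hstep n 0, Set.mem_Iio.mpr (hrlto (Nat.pair n 0 + 1))⟩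
      have hlub : IsLUB (f n ∩ Set.Iio o) o := by
        constructor
        · exact fun x hx => hx.2.le
        · intro b hb
          rw [ho_def]
          apply Ordinal.iSup_le
          intro j
          have hj' : j ≤ Nat.pair n j := Nat.right_le_pair n j
          have hin : r (Nat.pair n j + 1) ∈ f n ∩ Set.Iio o :=
            ⟨hstep n j, Set.mem_Iio.mpr (hrlto (Nat.pair n j + 1))⟩
          calc r j ≤ r (Nat.pair n j) := hrmono.monotone hj'
            _ ≤ r (Nat.pair n j + 1) := (hrmono (Nat.lt_succ_self _)).le
            _ ≤ b := hb hin
      exact (h n).2.2 o hoω hne hlub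
    refine ⟨o, Set.mem_iInter.2 hmem, ?_⟩
    calc a = r 0 := hr0.symm
      _ < o := hrlto 0
  · -- closed
    intro o ho hne hlub
    apply Set.mem_iInter.2
    intro n
    obtain ⟨x, hx⟩ := hne
    have hsub : (⋂ m, f m) ∩ Set.Iio o ⊆ f n ∩ Set.Iio o :=
      fun y hy => ⟨Set.mem_iInter.1 hy.1 n, hy.2⟩
    apply (h n).2.2 o ho ⟨x, hsub hx⟩
    constructor
    · exact fun y hy => hy.2.le
    · intro b hb
      exact hlub.2 (fun y hy => hb (hsub hy))

/-- The club of ordinals closed under the coding function. -/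
def Ecl : Set Ordinal := {o | o < omega1 ∧ ∀ ξ < o, ∀ n : ℕ, Ordinal.omega0 * ξ + n < o}

theorem isClubIn_Ecl : IsClubIn Ecl := by
  refine ⟨fun x hx => hx.1, ?_, ?_⟩
  · -- unbounded
    intro a ha
    let r : ℕ → Ordinal := fun j =>
      Nat.rec (a + 1) (fun _ x => Ordinal.omega0 * x + Ordinal.omega0) j
    have hr0 : r 0 = a + 1 := rfl
    have hrsucc : ∀ j, r (j + 1) = Ordinal.omega0 * r j + Ordinal.omega0 := fun j => rfl
    have hrlt : ∀ j, r j < omega1 := by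
      intro j
      induction j with
      | zero => exact succ_lt_omega1 ha
      | succ j ih =>
        rw [hrsucc]
        exact add_lt_omega1' (omega0_mul_lt_omega1' ih) omega0_lt_omega1'
    have hrmono : StrictMono r := by
      apply strictMono_nat_of_lt_succ
      intro j
      rw [hrsucc]
      calc r j ≤ Ordinal.omega0 * r j := Ordinal.le_mul_right _ Ordinal.omega0_pos
        _ < Ordinal.omega0 * r j + Ordinal.omega0 :=
            lt_add_of_pos_right _ Ordinal.omega0_pos
    set o : Ordinal := ⨆ j, r j with ho_def
    have hoω : o < omega1 := iSup_lt_omega1 r hrlt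
    have hrle : ∀ j, r j ≤ o := fun j => Ordinal.le_iSup r j
    have hrlto : ∀ j, r j < o := fun j =>
      lt_of_lt_of_le (hrmono (Nat.lt_succ_self j)) (hrle (j + 1))
    refine ⟨o, ⟨hoω, ?_⟩, ?_⟩
    · intro ξ hξ n
      obtain ⟨j, hj⟩ := (Ordinal.lt_iSup_iff).1 hξ
      have h1 : Ordinal.omega0 * ξ + n < Ordinal.omega0 * ξ + Ordinal.omega0 :=
        add_lt_add_right (Ordinal.nat_lt_omega0 n) _
      have h2 : Ordinal.omega0 * ξ + Ordinal.omega0 = Ordinal.omega0 * (Order.succ ξ) := by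
        rw [Ordinal.mul_succ]
      have h3 : Ordinal.omega0 * (Order.succ ξ) ≤ Ordinal.omega0 * r j :=
        mul_le_mul_right (Order.succ_le_of_lt hj) _
      calc Ordinal.omega0 * ξ + n < Ordinal.omega0 * ξ + Ordinal.omega0 := h1
        _ = Ordinal.omega0 * (Order.succ ξ) := h2
        _ ≤ Ordinal.omega0 * r j := h3
        _ < Ordinal.omega0 * r j + Ordinal.omega0 := lt_add_of_pos_right _ Ordinal.omega0_pos
        _ = r (j + 1) := (hrsucc j).symm
        _ ≤ o := hrle (j + 1)
    · calc a < a + 1 := lt_add_of_pos_right a zero_lt_one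
        _ = r 0 := hr0.symm
        _ < o := hrlto 0
  · -- closed
    intro o ho hne hlub
    refine ⟨ho, ?_⟩
    intro ξ hξ n
    have hex : ∃ e ∈ Ecl ∩ Set.Iio o, ξ < e := by
      by_contra hc
      push_neg at hc
      exact absurd hξ (not_lt.2 (hlub.2 (fun y hy => hc y hy)))
    obtain ⟨e, ⟨heE, heo⟩, hξe⟩ := hex
    exact lt_trans (heE.2 ξ hξe n) heo

end Aux

/-- If `T` is a nonspecial `ω₁`-tree and `S ⊆ ω₁` is such that
`T ↾ S ∈ NS^T`, then `◊_T` implies `◊(ω₁ \ S)`; in particular, if `◊_T` holds then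
`ω₁ \ S` is stationary. -/
theorem stmt2 {T : Type*} [PartialOrder T] [OrderBot T]
    (hchain : PredsChain T) (ht : T → Ordinal)
    (hht : IsHeightFun ht) (hΩ : HeightOmega1 ht) (hlev : CountableLevels ht)
    (hns : ¬ IsSpecialSet (Set.univ : Set T))
    (S : Set Ordinal) (hSsub : S ⊆ Set.Iio omega1)
    (hTS : InNS {t : T | ht t ∈ S})
    (hd : DiamondTree T) :
    DiamondOn (Set.Iio omega1 \ S) ∧ IsStationaryIn (Set.Iio omega1 \ S) := by
  classical
  obtain ⟨D, hDsub, hDdia⟩ := hd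
  obtain ⟨e, he⟩ := exists_level_enum hΩ hlev (ht := ht)
  -- the countably many candidate diamond sequences
  set D' : ℕ → Ordinal → Set Ordinal := fun n o =>
    {ξ : Ordinal | ξ < o ∧ ∃ s ∈ D (e o n), ht s = Ordinal.omega0 * ξ + n} with hD'def
  suffices hex : ∃ n : ℕ, ∀ X : Set Ordinal, X ⊆ Set.Iio omega1 →
      IsStationaryIn {o ∈ Set.Iio omega1 \ S | X ∩ Set.Iio o = D' n o} by
    obtain ⟨n, hn⟩ := hex
    have hdo : DiamondOn (Set.Iio omega1 \ S) :=
      ⟨D' n, fun o _ ξ hξ => hξ.1, hn⟩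
    refine ⟨hdo, ?_⟩
    intro C hC
    obtain ⟨o, ho⟩ := hn ∅ (by simp) C hC
    exact ⟨o, ho.1.1, ho.2⟩
  by_contra hno
  push_neg at hno
  have hno' : ∀ n : ℕ, ∃ X : Set Ordinal, X ⊆ Set.Iio omega1 ∧
      ∃ C : Set Ordinal, IsClubIn C ∧
        ({o ∈ Set.Iio omega1 \ S | X ∩ Set.Iio o = D' n o} ∩ C) = ∅ := by
    intro n
    obtain ⟨X, hXsub, hXbad⟩ := hno n
    refine ⟨X, hXsub, ?_⟩
    unfold IsStationaryIn at hXbad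
    push_neg at hXbad
    obtain ⟨C, hC, hCe⟩ := hXbad
    exact ⟨C, hC, hCe⟩
  choose X hXsub Cl hCl hClempty using hno'
  -- combine the sets `X n` into a single subset of the tree
  set XX : Set Ordinal :=
    ⋃ n : ℕ, (fun ξ : Ordinal => Ordinal.omega0 * ξ + (n : Ordinal)) '' X n with hXXdef
  set Xhat : Set T := {t : T | ht t ∈ XX} with hXhatdef
  have hG : ¬ InNS {t : T | Xhat ∩ Set.Iio t = D t} := hDdia Xhat
  set G : Set T := {t : T | Xhat ∩ Set.Iio t = D t} with hGdef
  set B : Set T := G ∩ {t : T | ht t ∉ S} with hBdef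
  have hB : ¬ InNS B := by
    intro hBNS
    apply hG
    apply inNS_mono _ (inNS_union hBNS hTS)
    intro t htG
    by_cases hts : ht t ∈ S
    · exact Or.inr hts
    · exact Or.inl ⟨htG, hts⟩
  -- the combined club
  set F : ℕ → Set Ordinal := fun n => Nat.rec Ecl (fun m _ => Cl m) n with hFdef
  have hF : ∀ n, IsClubIn (F n) := by
    intro n
    cases n with
    | zero => exact isClubIn_Ecl
    | succ m => exact hCl m
  obtain ⟨t, htB, htC⟩ := exists_height_in_club hht hΩ hlev hB (isClubIn_iInter hF)
  have hoω : ht t < omega1 := hΩ.1 t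
  have hoE : ht t ∈ Ecl := Set.mem_iInter.1 htC 0
  have hoCl : ∀ n, ht t ∈ Cl n := fun n => Set.mem_iInter.1 htC (n + 1)
  have hoS : ht t ∉ S := htB.2
  have htG2 : Xhat ∩ Set.Iio t = D t := htB.1
  obtain ⟨n, hen⟩ := he (ht t) hoω t rfl
  -- the decoded guess is correct at `ht t`
  have hguess : X n ∩ Set.Iio (ht t) = D' n (ht t) := by
    ext ξ
    constructor
    · rintro ⟨hξX, hξo⟩
      have hξo' : (ξ : Ordinal) < ht t := hξo
      have hcode : Ordinal.omega0 * ξ + n < ht t := hoE.2 ξ hξo' n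
      obtain ⟨s, hst, hhts⟩ := hht.2 t _ hcode
      have hsXhat : s ∈ Xhat := by
        rw [hXhatdef]
        simp only [Set.mem_setOf_eq, hXXdef, Set.mem_iUnion]
        exact ⟨n, ξ, hξX, hhts.symm⟩
      have hsD : s ∈ D t := by
        rw [← htG2]
        exact ⟨hsXhat, hst⟩
      refine ⟨hξo', s, ?_, hhts⟩
      rwa [hen]
    · rintro ⟨hξo, s, hsD, hhts⟩
      rw [hen] at hsD
      have hsXhat : s ∈ Xhat ∩ Set.Iio t := by
        rw [htG2]; exact hsD
      have : ht s ∈ XX := hsXhat.1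
      simp only [hXXdef, Set.mem_iUnion, Set.mem_image] at this
      obtain ⟨m, ξ', hξ'X, hξ'eq⟩ := this
      rw [hhts] at hξ'eq
      obtain ⟨hξeq, hneq⟩ := code_inj hξ'eq
      refine ⟨?_, hξo⟩
      rw [← hξeq]
      rw [hneq] at hξ'X
      exact hξ'X
  have hmem : ht t ∈ {o ∈ Set.Iio omega1 \ S | X n ∩ Set.Iio o = D' n o} ∩ Cl n :=
    ⟨⟨⟨hoω, hoS⟩, hguess⟩, hoCl n⟩
  rw [hClempty n] at hmem
  exact hmem
end

section
/- Let T be a nonspecial ω₁-tree. Then ◊_T implies ◊. -/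
open Set

namespace Stmt3Aux

universe u w

lemma omega1_eq : (omega1 : Ordinal.{u}) = (Cardinal.aleph 1).ord := by
  rw [omega1, Cardinal.ord_aleph]

lemma lt_omega1_iff {o : Ordinal.{u}} : o < omega1 ↔ o.card ≤ Cardinal.aleph0 := by
  rw [omega1_eq, Cardinal.lt_ord, ← Cardinal.succ_aleph0, Order.lt_succ_iff]

lemma omega1_pos : (0 : Ordinal.{u}) < omega1 := by
  rw [omega1]; exact Ordinal.omega_pos 1

lemma omega1_isLimit : Order.IsSuccLimit (omega1 : Ordinal.{u}) := by
  rw [omega1_eq]; exact Cardinal.isSuccLimit_ord (Cardinal.aleph0_le_aleph _)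

lemma succ_lt_omega1 {o : Ordinal.{u}} (h : o < omega1) : o + 1 < omega1 := by
  rw [Ordinal.add_one_eq_succ]; exact omega1_isLimit.succ_lt h

lemma omega0_mul_lt_omega1 {o : Ordinal.{u}} (h : o < omega1) :
    Ordinal.omega0 * o < omega1 := by
  rw [lt_omega1_iff] at h ⊢
  rw [Ordinal.card_mul, Ordinal.card_omega0]
  calc Cardinal.aleph0 * o.card ≤ Cardinal.aleph0 * Cardinal.aleph0 :=
        mul_le_mul_right h _
    _ = Cardinal.aleph0 := Cardinal.aleph0_mul_aleph0

lemma iSup_lt_omega1 (f : ℕ → Ordinal.{u}) (h : ∀ n, f n < omega1) :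
    (⨆ n, f n) < omega1 := by
  rw [omega1_eq, Cardinal.ord_aleph]
  exact Ordinal.iSup_lt_omega_one h

lemma bddAbove_range_of_lt_omega1 {f : ℕ → Ordinal.{u}} (h : ∀ n, f n < omega1) :
    BddAbove (Set.range f) := ⟨omega1, by rintro x ⟨n, rfl⟩; exact (h n).le⟩

lemma countable_Iio {o : Ordinal.{u}} (h : o < omega1) : (Set.Iio o).Countable := by
  have h1 : Cardinal.mk (Set.Iio o) ≤ Cardinal.aleph0 := by
    rw [Ordinal.mk_Iio_ordinal, ← Cardinal.lift_aleph0.{u+1, u}]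
    exact Cardinal.lift_le.2 (lt_omega1_iff.1 h)
  exact Set.countable_coe_iff.mp (Cardinal.mk_le_aleph0_iff.mp h1)

lemma pair_lt {α β : Ordinal.{u}} (k : ℕ) (hβ : β < α) (hfix : Ordinal.omega0 * α = α) :
    Ordinal.omega0 * β + (k : Ordinal) < α := by
  have h1 : Ordinal.omega0 * β + (k : Ordinal) < Ordinal.omega0 * β + Ordinal.omega0 :=
    (add_lt_add_iff_left _).2 (Ordinal.nat_lt_omega0 k)
  have h2 : Ordinal.omega0 * β + Ordinal.omega0 = Ordinal.omega0 * (β + 1) := by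
    rw [mul_add_one]
  have h3 : Ordinal.omega0 * (β + 1) ≤ Ordinal.omega0 * α := by
    apply mul_le_mul_right
    rwa [Ordinal.add_one_eq_succ, Order.succ_le_iff]
  calc Ordinal.omega0 * β + (k : Ordinal) < Ordinal.omega0 * (β + 1) := h2 ▸ h1
    _ ≤ Ordinal.omega0 * α := h3
    _ = α := hfix

lemma le_pair (β : Ordinal.{u}) (k : ℕ) : β ≤ Ordinal.omega0 * β + (k : Ordinal) :=
  le_trans (Ordinal.le_mul_right β Ordinal.omega0_pos) le_self_add

lemma pair_inj {β β' : Ordinal.{u}} {k k' : ℕ}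
    (h : Ordinal.omega0 * β + (k : Ordinal) = Ordinal.omega0 * β' + (k' : Ordinal)) :
    β = β' ∧ k = k' := by
  have hβ : β = β' := by
    have e1 : (Ordinal.omega0 * β + (k : Ordinal)) / Ordinal.omega0 = β := by
      rw [Ordinal.mul_add_div _ Ordinal.omega0_ne_zero,
        Ordinal.div_eq_zero_of_lt (Ordinal.nat_lt_omega0 k), add_zero]
    have e2 : (Ordinal.omega0 * β' + (k' : Ordinal)) / Ordinal.omega0 = β' := by
      rw [Ordinal.mul_add_div _ Ordinal.omega0_ne_zero,
        Ordinal.div_eq_zero_of_lt (Ordinal.nat_lt_omega0 k'), add_zero]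
    rw [← e1, ← e2, h]
  subst hβ
  have hk : (k : Ordinal) = (k' : Ordinal) := add_left_cancel h
  exact ⟨rfl, Nat.cast_injective hk⟩


/-! ### Tree lemmas -/

section Tree

variable {T : Type*} [PartialOrder T] {ht : T → Ordinal.{u}}

lemma isSpecialSet_mono {U V : Set T} (hUV : U ⊆ V) (hV : IsSpecialSet V) :
    IsSpecialSet U := by
  obtain ⟨A, hA, hsub⟩ := hV
  exact ⟨A, hA, fun t htU => hsub (hUV htU)⟩

lemma isAntichain_level (hmono : ∀ s t : T, s < t → ht s < ht t) (o : Ordinal.{u}) :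
    IsAntichain (· ≤ ·) {t : T | ht t = o} := by
  intro a ha b hb hab hle
  simp only [Set.mem_setOf_eq] at ha hb
  have := hmono a b (lt_of_le_of_ne hle hab)
  rw [ha, hb] at this
  exact lt_irrefl o this

lemma isSpecialSet_of_heights_lt (hmono : ∀ s t : T, s < t → ht s < ht t)
    {δ : Ordinal.{u}} (hδ : δ < omega1) {U : Set T} (hU : ∀ t ∈ U, ht t < δ) :
    IsSpecialSet U := by
  rcases Set.eq_empty_or_nonempty (Set.Iio δ) with he | hne
  · refine ⟨fun _ => ∅, fun n => by simp [IsAntichain, Set.Pairwise], ?_⟩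
    intro t htU
    exact absurd (Set.mem_Iio.2 (hU t htU)) (Set.eq_empty_iff_forall_notMem.1 he _)
  · obtain ⟨g, hg⟩ := (countable_Iio hδ).exists_surjective hne
    refine ⟨fun n => {t : T | ht t = (g n : Ordinal)}, fun n => isAntichain_level hmono _, ?_⟩
    intro t htU
    obtain ⟨n, hn⟩ := hg ⟨ht t, hU t htU⟩
    exact Set.mem_iUnion.2 ⟨n, by simp [hn]⟩

lemma inNS_mono [OrderBot T] {B B' : Set T} (hBB : B ⊆ B') (h : InNS B') : InNS B := by
  obtain ⟨f, hreg, hfib⟩ := h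
  exact ⟨f, fun t htB => hreg t (hBB htB), fun t =>
    isSpecialSet_mono (fun s hs => show s ∈ B' ∧ f s = t from ⟨hBB hs.1, hs.2⟩) (hfib t)⟩

lemma inNS_compl_club [OrderBot T] (hht : IsHeightFun ht) (hΩ : HeightOmega1 ht)
    {C : Set Ordinal.{u}} (hC : IsClubIn C) : InNS {t : T | ht t ∉ C} := by
  classical
  refine ⟨fun t => if h : ∃ s, s < t ∧ ht s = sSup (C ∩ Set.Iio (ht t))
      then h.choose else ⊥, ?_, ?_⟩
  · intro t _ htbot
    dsimp only
    split
    · next h => exact h.choose_spec.1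
    · exact Ne.bot_lt htbot
  · intro u
    obtain ⟨δ, hδC, hδu⟩ := hC.2.1 (ht u) (hΩ.1 u)
    have hδ1 : δ < omega1 := hC.1 hδC
    apply isSpecialSet_of_heights_lt hht.1 hδ1
    intro t htmem
    obtain ⟨htB, hft⟩ := htmem
    dsimp only at hft
    simp only [Set.mem_setOf_eq] at htB
    by_contra hcon
    push_neg at hcon
    have hne' : δ ≠ ht t := fun he => htB (he ▸ hδC)
    have hδt : δ < ht t := lt_of_le_of_ne hcon hne'
    set S := C ∩ Set.Iio (ht t) with hSdef
    have hSne : S.Nonempty := ⟨δ, hδC, hδt⟩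
    have hbdd : BddAbove S := ⟨ht t, fun x hx => hx.2.le⟩
    have hlub : IsLUB S (sSup S) := isLUB_csSup hSne hbdd
    have hsup_le : sSup S ≤ ht t := csSup_le hSne (fun x hx => hx.2.le)
    have hsup_lt : sSup S < ht t := by
      rcases lt_or_eq_of_le hsup_le with h | h
      · exact h
      · rw [h] at hlub
        exact absurd (hC.2.2 (ht t) (hΩ.1 t) hSne hlub) htB
    have hex : ∃ s, s < t ∧ ht s = sSup S := hht.2 t _ hsup_lt
    rw [dif_pos hex] at hft
    have hu : ht u = sSup S := by rw [← hft]; exact hex.choose_spec.2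
    have hd2 : δ ≤ sSup S := le_csSup hbdd ⟨hδC, hδt⟩
    rw [← hu] at hd2
    exact absurd hδu (not_lt.2 hd2)

lemma exists_mem_club [OrderBot T] (hht : IsHeightFun ht) (hΩ : HeightOmega1 ht)
    {G : Set T} (hG : ¬ InNS G) {C : Set Ordinal.{u}} (hC : IsClubIn C) :
    ∃ t ∈ G, ht t ∈ C := by
  by_contra h
  push_neg at h
  exact hG (inNS_mono (fun t htG => h t htG) (inNS_compl_club hht hΩ hC))

end Tree

/-! ### Club lemmas -/

lemma isClubIn_iInter (C : ℕ → Set Ordinal.{u}) (h : ∀ n, IsClubIn (C n)) :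
    IsClubIn (⋂ n, C n) := by
  classical
  refine ⟨fun x hx => (h 0).1 (Set.mem_iInter.1 hx 0), ?_, ?_⟩
  · intro o ho
    let step : Ordinal.{u} → ℕ → Ordinal.{u} := fun x n =>
      if hx : x < omega1 then ((h n).2.1 x hx).choose else 0
    have hstep : ∀ x n, x < omega1 → step x n ∈ C n ∧ x < step x n ∧ step x n < omega1 := by
      intro x n hx
      have hcs := ((h n).2.1 x hx).choose_spec
      refine ⟨?_, ?_, ?_⟩ <;> simp only [step, dif_pos hx]
      · exact hcs.1
      · exact hcs.2
      · exact (h n).1 hcs.1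
    let g : ℕ → Ordinal.{u} := fun n => Nat.rec o (fun m ih => step ih (Nat.unpair m).1) n
    have hg0 : g 0 = o := rfl
    have hgsucc : ∀ m, g (m+1) = step (g m) (Nat.unpair m).1 := fun m => rfl
    have hglt : ∀ n, g n < omega1 := by
      intro n; induction n with
      | zero => exact ho
      | succ m ihm => rw [hgsucc]; exact (hstep _ _ ihm).2.2
    have hgmono : ∀ m, g m < g (m+1) := fun m => (hstep _ _ (hglt m)).2.1
    have hgC : ∀ m, g (m+1) ∈ C (Nat.unpair m).1 := fun m => (hstep _ _ (hglt m)).1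
    set δ := ⨆ n, g n with hδdef
    have hδlt : δ < omega1 := iSup_lt_omega1 g hglt
    have hbdd : BddAbove (Set.range g) := bddAbove_range_of_lt_omega1 hglt
    have hle : ∀ n, g n ≤ δ := fun n => le_ciSup hbdd n
    have hlt : ∀ n, g n < δ := fun n => lt_of_lt_of_le (hgmono n) (hle (n+1))
    have hsm : StrictMono g := strictMono_nat_of_lt_succ hgmono
    refine ⟨δ, Set.mem_iInter.2 (fun i => ?_), lt_of_lt_of_le (hg0 ▸ hgmono 0) (hle 1)⟩
    apply (h i).2.2 δ hδlt
    · refine ⟨g (Nat.pair i 0 + 1), ?_, Set.mem_Iio.2 (hlt (Nat.pair i 0 + 1))⟩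
      have := hgC (Nat.pair i 0); rwa [Nat.unpair_pair] at this
    · constructor
      · intro x hx; exact hx.2.le
      · intro x hx
        refine ciSup_le (fun n => ?_)
        have h1 : g n ≤ g (Nat.pair i n) := hsm.monotone (Nat.right_le_pair i n)
        have h2 : g (Nat.pair i n) < g (Nat.pair i n + 1) := hgmono _
        have h3 : g (Nat.pair i n + 1) ∈ C i ∩ Set.Iio δ := by
          refine ⟨?_, Set.mem_Iio.2 (hlt (Nat.pair i n + 1))⟩
          have := hgC (Nat.pair i n); rwa [Nat.unpair_pair] at this
        exact le_trans (le_of_lt (lt_of_le_of_lt h1 h2)) (hx h3)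
  · intro o ho hne hlub
    refine Set.mem_iInter.2 (fun i => ?_)
    apply (h i).2.2 o ho
    · obtain ⟨x, hx⟩ := hne
      exact ⟨x, Set.mem_iInter.1 hx.1 i, hx.2⟩
    · constructor
      · intro x hx; exact hx.2.le
      · intro x hx
        apply hlub.2
        intro y hy
        exact hx ⟨Set.mem_iInter.1 hy.1 i, hy.2⟩

def ClubFix : Set Ordinal.{u} := {α | α < omega1 ∧ Ordinal.omega0 * α = α ∧ 0 < α}

lemma isClubIn_clubFix : IsClubIn (ClubFix.{u}) := by
  refine ⟨fun x hx => hx.1, ?_, ?_⟩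
  · intro o ho
    set b := Ordinal.nfp (Ordinal.omega0 * ·) (o+1) with hb
    have hfix : Ordinal.omega0 * b = b :=
      Ordinal.nfp_fp (Ordinal.isNormal_mul_right Ordinal.omega0_pos) (o+1)
    have hob : o < b := lt_of_lt_of_le (lt_add_one o) (Ordinal.le_nfp _ _)
    have hblt : b < omega1 := by
      rw [hb, ← Ordinal.iSup_iterate_eq_nfp]
      apply iSup_lt_omega1
      intro n
      induction n with
      | zero => simpa using succ_lt_omega1 ho
      | succ m ihm => rw [Function.iterate_succ_apply']; exact omega0_mul_lt_omega1 ihm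
    exact ⟨b, ⟨hblt, hfix, lt_of_le_of_lt zero_le hob⟩, hob⟩
  · intro o ho hne hlub
    have hpos : 0 < o := by
      obtain ⟨c, hc⟩ := hne
      exact lt_trans hc.1.2.2 hc.2
    have hexgt : ∀ a, a < o → ∃ c ∈ ClubFix ∩ Set.Iio o, a < c := by
      intro a ha
      by_contra hcon
      push_neg at hcon
      have hub : a ∈ upperBounds (ClubFix ∩ Set.Iio o) := fun y hy => hcon y hy
      exact absurd (hlub.2 hub) (not_le.2 ha)
    have hlim : Order.IsSuccLimit o := by
      refine Ordinal.isSuccLimit_iff.2 ⟨hpos.ne', Order.isSuccPrelimit_of_succ_lt fun a ha => ?_⟩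
      obtain ⟨c, hc, hac⟩ := hexgt a ha
      exact lt_of_le_of_lt (Order.succ_le_of_lt hac) hc.2
    have hle2 : Ordinal.omega0 * o ≤ o := by
      rw [Ordinal.mul_le_iff_of_isSuccLimit hlim]
      intro b hb
      obtain ⟨c, hc, hbc⟩ := hexgt b hb
      calc Ordinal.omega0 * b ≤ Ordinal.omega0 * c := mul_le_mul_right hbc.le _
        _ = c := hc.1.2.1
        _ ≤ o := hc.2.le
    exact ⟨ho, le_antisymm hle2 (Ordinal.le_mul_right o Ordinal.omega0_pos), hpos⟩


lemma lift_omega1 : Ordinal.lift.{u, 0} (omega1 : Ordinal.{0}) = (omega1 : Ordinal.{u}) := by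
  simp only [omega1_eq]
  rw [Cardinal.lift_ord, Cardinal.lift_aleph, Ordinal.lift_one]

lemma heightFun_transfer {T : Type w} [PartialOrder T] {ht : T → Ordinal.{u}}
    (hht : IsHeightFun ht) (hΩ : HeightOmega1 ht) (hlev : CountableLevels ht) :
    ∃ ht' : T → Ordinal.{v}, IsHeightFun ht' ∧ HeightOmega1 ht' ∧ CountableLevels ht' := by
  classical
  let φ : Ordinal.{u} → Ordinal.{v} := fun o =>
    if h : ∃ o₀ : Ordinal.{0}, Ordinal.lift.{u, 0} o₀ = o then Ordinal.lift.{v, 0} h.choose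
    else 0
  have hφ : ∀ o : Ordinal.{u}, o < omega1 → ∃ o₀ : Ordinal.{0},
      Ordinal.lift.{u, 0} o₀ = o ∧ o₀ < omega1 ∧ φ o = Ordinal.lift.{v, 0} o₀ := by
    intro o ho
    have hle : o ≤ Ordinal.lift.{u, 0} omega1 := by rw [lift_omega1]; exact ho.le
    obtain ⟨o₀, ho₀⟩ := Ordinal.mem_range_lift_of_le hle
    have hex : ∃ x : Ordinal.{0}, Ordinal.lift.{u, 0} x = o := ⟨o₀, ho₀⟩
    refine ⟨o₀, ho₀, ?_, ?_⟩
    · have h2 : Ordinal.lift.{u, 0} o₀ < Ordinal.lift.{u, 0} omega1 := by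
        rw [ho₀, lift_omega1]; exact ho
      exact Ordinal.lift_lt.1 h2
    · simp only [φ, dif_pos hex]
      congr 1
      exact Ordinal.lift_inj.1 (hex.choose_spec.trans ho₀.symm)
  have hφlt : ∀ o : Ordinal.{u}, o < omega1 → φ o < omega1 := by
    intro o ho
    obtain ⟨o₀, _, h1, h2⟩ := hφ o ho
    rw [h2, ← lift_omega1.{v}]
    exact Ordinal.lift_lt.2 h1
  have hφmono : ∀ o o' : Ordinal.{u}, o < omega1 → o' < omega1 → (φ o < φ o' ↔ o < o') := by
    intro o o' ho ho'
    obtain ⟨o₀, e1, _, e2⟩ := hφ o ho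
    obtain ⟨o₀', e1', _, e2'⟩ := hφ o' ho'
    rw [e2, e2', Ordinal.lift_lt, ← e1, ← e1', Ordinal.lift_lt]
  have hφinj : ∀ o o' : Ordinal.{u}, o < omega1 → o' < omega1 → φ o = φ o' → o = o' := by
    intro o o' ho ho' he
    rcases lt_trichotomy o o' with h | h | h
    · exact absurd ((hφmono o o' ho ho').2 h) (by rw [he]; exact lt_irrefl _)
    · exact h
    · exact absurd ((hφmono o' o ho' ho).2 h) (by rw [he]; exact lt_irrefl _)
  have hφsurj : ∀ p : Ordinal.{v}, p < omega1 → ∃ o : Ordinal.{u}, o < omega1 ∧ φ o = p := by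
    intro p hp
    have hle : p ≤ Ordinal.lift.{v, 0} omega1 := by rw [lift_omega1]; exact hp.le
    obtain ⟨p₀, hp₀⟩ := Ordinal.mem_range_lift_of_le hle
    have holt : Ordinal.lift.{u, 0} p₀ < omega1 := by
      rw [← lift_omega1.{u}]
      apply Ordinal.lift_lt.2
      exact Ordinal.lift_lt.1 (by rw [hp₀, lift_omega1.{v}]; exact hp)
    refine ⟨Ordinal.lift.{u, 0} p₀, holt, ?_⟩
    obtain ⟨q₀, e1, _, e2⟩ := hφ _ holt
    rw [e2, Ordinal.lift_inj.1 e1, hp₀]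
  refine ⟨fun t => φ (ht t), ⟨?_, ?_⟩, ⟨?_, ?_⟩, ?_⟩
  · intro s t hst
    exact (hφmono _ _ (hΩ.1 s) (hΩ.1 t)).2 (hht.1 s t hst)
  · intro t o' ho'
    have h1 : o' < omega1 := lt_trans ho' (hφlt _ (hΩ.1 t))
    obtain ⟨o, ho, rfl⟩ := hφsurj o' h1
    have h2 : o < ht t := (hφmono o (ht t) ho (hΩ.1 t)).1 ho'
    obtain ⟨s, hs1, hs2⟩ := hht.2 t o h2
    exact ⟨s, hs1, show φ (ht s) = φ o by rw [hs2]⟩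
  · intro t; exact hφlt _ (hΩ.1 t)
  · intro o' ho'
    obtain ⟨o, ho, rfl⟩ := hφsurj o' ho'
    obtain ⟨t, htt⟩ := hΩ.2 o ho
    exact ⟨t, show φ (ht t) = φ o by rw [htt]⟩
  · intro o'
    rcases Set.eq_empty_or_nonempty {t : T | φ (ht t) = o'} with he | ⟨t₀, ht₀⟩
    · rw [he]; exact Set.countable_empty
    · have hsub : {t : T | φ (ht t) = o'} ⊆ {t : T | ht t = ht t₀} := by
        intro t htmem
        exact hφinj _ _ (hΩ.1 t) (hΩ.1 t₀) (htmem.trans ht₀.symm)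
      exact (hlev (ht t₀)).mono hsub

theorem stmt3_core {T : Type w} [PartialOrder T] [OrderBot T] (ht : T → Ordinal.{u})
    (hht : IsHeightFun ht) (hΩ : HeightOmega1 ht) (hlev : CountableLevels ht)
    (hd : DiamondTree T) :
    DiamondOn (Set.Iio (omega1 : Ordinal.{u})) := by
  classical
  obtain ⟨D, hDsub, hDg⟩ := hd
  -- enumeration of the levels
  let lev : Ordinal → ℕ → T := fun α n =>
    if h : {t : T | ht t = α}.Nonempty then (((hlev α).exists_surjective h).choose n).1
    else ⊥
  have hlevsurj : ∀ t : T, ∃ n, lev (ht t) n = t := by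
    intro t
    have hmem : t ∈ {s : T | ht s = ht t} := rfl
    have hne : {s : T | ht s = ht t}.Nonempty := ⟨t, hmem⟩
    obtain ⟨n, hn⟩ := (((hlev (ht t)).exists_surjective hne).choose_spec) ⟨t, hmem⟩
    refine ⟨n, ?_⟩
    simp only [lev]
    rw [dif_pos hne, hn]
  -- the candidate diamond sequences
  let E : ℕ → ℕ → Ordinal → Set Ordinal := fun n k α =>
    {β | β < α ∧ ∃ s ∈ D (lev α n), ht s = Ordinal.omega0 * β + (k : Ordinal)}
  by_contra hnd
  have hfail : ∀ n k : ℕ, ∃ X : Set Ordinal, X ⊆ Set.Iio omega1 ∧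
      ∃ C : Set Ordinal, IsClubIn C ∧
        ({o ∈ Set.Iio omega1 | X ∩ Set.Iio o = E n k o} ∩ C) = ∅ := by
    intro n k
    have h1 : ¬ (∀ X : Set Ordinal, X ⊆ Set.Iio omega1 →
        IsStationaryIn {o ∈ Set.Iio omega1 | X ∩ Set.Iio o = E n k o}) := by
      intro hall
      exact hnd ⟨E n k, fun o _ β hβ => hβ.1, hall⟩
    push_neg at h1
    obtain ⟨X, hX1, hX2⟩ := h1
    unfold IsStationaryIn at hX2
    push_neg at hX2
    obtain ⟨C, hC1, hC2⟩ := hX2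
    exact ⟨X, hX1, C, hC1, hC2⟩
  choose X hX Cl hCl hEmpty using hfail
  -- the coded subset of `ω₁`
  let Y : Set Ordinal := {γ | ∃ n k : ℕ, ∃ β : Ordinal,
    β ∈ X n (Nat.pair n k) ∧ γ = Ordinal.omega0 * β + ((Nat.pair n k : ℕ) : Ordinal)}
  -- the club where everything is closed
  let CC : ℕ → Set Ordinal := fun m =>
    if m = 0 then ClubFix else Cl (Nat.unpair (m - 1)).1 (Nat.unpair (m - 1)).2
  have hCC : ∀ m, IsClubIn (CC m) := by
    intro m
    cases m with
    | zero => simpa only [CC, if_pos rfl] using isClubIn_clubFix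
    | succ m =>
        simpa only [CC, if_neg (Nat.succ_ne_zero m)] using
          hCl (Nat.unpair (m + 1 - 1)).1 (Nat.unpair (m + 1 - 1)).2
  have hclub : IsClubIn (⋂ m, CC m) := isClubIn_iInter CC hCC
  -- guess the coded set
  obtain ⟨t, htG, htC⟩ :=
    exists_mem_club hht hΩ (hDg {s : T | ht s ∈ Y}) hclub
  have hGt : {s : T | ht s ∈ Y} ∩ Set.Iio t = D t := htG
  have hα0 : ht t ∈ ClubFix := by
    have := Set.mem_iInter.1 htC 0
    simpa only [CC, if_pos rfl] using this
  obtain ⟨hαlt, hαfix, hαpos⟩ := hα0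
  obtain ⟨n₀, hn₀⟩ := hlevsurj t
  have hkey : E n₀ (Nat.pair n₀ 0) (ht t) = X n₀ (Nat.pair n₀ 0) ∩ Set.Iio (ht t) := by
    ext β
    constructor
    · rintro ⟨hβα, s, hsD, hs⟩
      rw [hn₀, ← hGt] at hsD
      obtain ⟨hsY, hslt⟩ := hsD
      obtain ⟨n, k, β', hβ'X, heq⟩ := hsY
      rw [hs] at heq
      obtain ⟨hββ', hnk⟩ := pair_inj heq
      obtain ⟨hn, hk⟩ := Nat.pair_eq_pair.1 hnk
      subst hββ'
      rw [hn, hk]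
      exact ⟨hβ'X, hβα⟩
    · rintro ⟨hβX, hβα⟩
      refine ⟨hβα, ?_⟩
      have hlt2 : Ordinal.omega0 * β + ((Nat.pair n₀ 0 : ℕ) : Ordinal) < ht t :=
        pair_lt (Nat.pair n₀ 0) hβα hαfix
      obtain ⟨s, hst, hhts⟩ := hht.2 t _ hlt2
      refine ⟨s, ?_, hhts⟩
      rw [hn₀, ← hGt]
      exact ⟨⟨n₀, 0, β, hβX, hhts.symm ▸ hhts ▸ rfl⟩, hst⟩
  have hmem2 : ht t ∈ {o ∈ Set.Iio omega1 |
      X n₀ (Nat.pair n₀ 0) ∩ Set.Iio o = E n₀ (Nat.pair n₀ 0) o} ∩ Cl n₀ (Nat.pair n₀ 0) := by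
    refine ⟨⟨hαlt, hkey.symm⟩, ?_⟩
    have := Set.mem_iInter.1 htC (Nat.pair n₀ (Nat.pair n₀ 0) + 1)
    simpa only [CC, if_neg (Nat.succ_ne_zero _), Nat.add_sub_cancel, Nat.unpair_pair] using this
  rw [hEmpty n₀ (Nat.pair n₀ 0)] at hmem2
  exact hmem2


end Stmt3Aux

/-- If `T` is a nonspecial `ω₁`-tree, then `◊_T` implies `◊`. -/
theorem stmt3 {T : Type*} [PartialOrder T] [OrderBot T]
    (hchain : PredsChain T) (ht : T → Ordinal)
    (hht : IsHeightFun ht) (hΩ : HeightOmega1 ht) (hlev : CountableLevels ht)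
    (hns : ¬ IsSpecialSet (Set.univ : Set T))
    (hd : DiamondTree T) :
    DiamondOn (Set.Iio omega1) := by
  obtain ⟨ht', hht', hΩ', hlev'⟩ := Stmt3Aux.heightFun_transfer hht hΩ hlev
  exact Stmt3Aux.stmt3_core ht' hht' hΩ' hlev' hd
end

section
/- Let S and T be trees of height ω₁ with S ≤ T. Then NS^T ≤_K NS^S; that is, there is a map f : S → T such that f⁻¹(A) ∈ NS^S for every A ∈ NS^T. -/
open Set

section Aux

variable {S T : Type*} [PartialOrder S] [PartialOrder T]

/-- In a tree, two elements below a common element with equal heights are equal. -/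
lemma below_uniq (hchain : PredsChain T) {ht : T → Ordinal} (hht : IsHeightFun ht)
    {a x y : T} (hx : x ≤ a) (hy : y ≤ a) (hxy : ht x = ht y) : x = y := by
  rcases eq_or_lt_of_le hx with rfl | hx
  · rcases eq_or_lt_of_le hy with rfl | hy
    · rfl
    · exact absurd hxy (by exact (ne_of_gt (hht.1 _ _ hy)))
  · rcases eq_or_lt_of_le hy with rfl | hy
    · exact absurd hxy (ne_of_lt (hht.1 _ _ hx))
    · rcases eq_or_ne x y with rfl | hne
      · rfl
      · rcases hchain a hx hy hne with h | h
        · exact absurd hxy (ne_of_lt (hht.1 _ _ (lt_of_le_of_ne h hne)))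
        · exact absurd hxy (ne_of_gt (hht.1 _ _ (lt_of_le_of_ne h hne.symm)))

/-- A strictly increasing map does not decrease heights. -/
lemma ht_le_of_strictMono {htS : S → Ordinal} (hhtS : IsHeightFun htS)
    {htT : T → Ordinal} (hhtT : IsHeightFun htT) {g : S → T} (hg : StrictMono g) :
    ∀ s : S, htS s ≤ htT (g s) := by
  have key : ∀ o : Ordinal, ∀ s : S, htS s = o → o ≤ htT (g s) := by
    intro o
    induction o using Ordinal.induction with
    | h o IH =>
      intro s hs
      refine le_of_forall_lt fun o' ho' => ?_
      obtain ⟨p, hps, hp⟩ := hhtS.2 s o' (hs ▸ ho')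
      have h1 : o' ≤ htT (g p) := IH o' ho' p hp
      exact lt_of_le_of_lt h1 (hhtT.1 _ _ (hg hps))
  exact fun s => key (htS s) s rfl

/-- Preimage of an antichain under a strictly increasing map is an antichain. -/
lemma isAntichain_preimage {g : S → T} (hg : StrictMono g) {A : Set T}
    (hA : IsAntichain (· ≤ ·) A) : IsAntichain (· ≤ ·) (g ⁻¹' A) := by
  intro a ha b hb hne hab
  exact hA ha hb (ne_of_lt (hg (lt_of_le_of_ne hab hne))) (le_of_lt (hg (lt_of_le_of_ne hab hne)))

end Aux

/-- Lifting a height function to a larger universe. -/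
lemma isHeightFun_lift {T : Type*} [PartialOrder T] {ht : T → Ordinal.{u}}
    (h : IsHeightFun ht) : IsHeightFun (fun t => Ordinal.lift.{v} (ht t)) := by
  constructor
  · intro s t hst
    exact Ordinal.lift_lt.2 (h.1 s t hst)
  · intro t o ho
    obtain ⟨o', ho', rfl⟩ := Ordinal.lt_lift_iff.1 ho
    obtain ⟨s, hs, hs'⟩ := h.2 t o' ho'
    exact ⟨s, hs, congrArg _ hs'⟩

/-- The main argument, with both height functions in a common universe. -/
lemma stmt6_core {S T : Type*} [PartialOrder S] [OrderBot S] [PartialOrder T] [OrderBot T]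
    (hchainS : PredsChain S) (htS : S → Ordinal.{u})
    (hhtS : IsHeightFun htS)
    (hchainT : PredsChain T) (htT : T → Ordinal.{u})
    (hhtT : IsHeightFun htT)
    (hle : ∃ g : S → T, StrictMono g) :
    ∃ f : S → T, ∀ A : Set T, InNS A → InNS (f ⁻¹' A) := by
  classical
  obtain ⟨g, hg⟩ := hle
  have hle' : ∀ s : S, htS s ≤ htT (g s) := ht_le_of_strictMono hhtS hhtT hg
  -- replace `g` by a strictly increasing height-preserving map `f`
  have hex : ∀ s : S, ∃ x : T, x ≤ g s ∧ htT x = htS s := by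
    intro s
    rcases lt_or_eq_of_le (hle' s) with h | h
    · obtain ⟨x, hx, hxh⟩ := hhtT.2 (g s) (htS s) h
      exact ⟨x, le_of_lt hx, hxh⟩
    · exact ⟨g s, le_rfl, h.symm⟩
  choose f hf1 hf2 using hex
  have hfmono : StrictMono f := by
    intro s s' hss
    have h1 : f s < g s' := lt_of_le_of_lt (hf1 s) (hg hss)
    have h2 : f s ≤ f s' ∨ f s' ≤ f s := by
      rcases eq_or_lt_of_le (hf1 s') with h | h
      · exact Or.inl (h ▸ le_of_lt h1)
      · rcases eq_or_ne (f s) (f s') with he | hne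
        · exact Or.inl (le_of_eq he)
        · exact hchainT (g s') h1 h hne
    have hne : htT (f s) < htT (f s') := by
      rw [hf2 s, hf2 s']; exact hhtS.1 _ _ hss
    rcases h2 with h | h
    · exact lt_of_le_of_ne h (fun he => absurd (congrArg htT he) (ne_of_lt hne))
    · rcases eq_or_lt_of_le h with he | hlt
      · exact absurd (congrArg htT he.symm) (ne_of_lt hne)
      · exact absurd (hhtT.1 _ _ hlt) (not_lt_of_gt hne)
  have hfne : ∀ s : S, s ≠ ⊥ → f s ≠ (⊥ : T) := by
    intro s hs hcon
    have h1 : htS (⊥ : S) < htS s := hhtS.1 _ _ (Ne.bot_lt hs)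
    have h2 : htT (f (⊥ : S)) < htT (f s) := by
      rw [hf2, hf2]; exact h1
    rw [hcon] at h2
    have h3 : htT (⊥ : T) ≤ htT (f ⊥) := by
      rcases eq_or_lt_of_le (bot_le : (⊥ : T) ≤ f ⊥) with h | h
      · exact le_of_eq (congrArg htT h)
      · exact le_of_lt (hhtT.1 _ _ h)
    exact absurd (lt_of_le_of_lt h3 h2) (lt_irrefl _)
  refine ⟨f, ?_⟩
  rintro A ⟨h, hreg, hfib⟩
  -- build the regressive map on `f ⁻¹' A`
  have hrdef : ∀ s : S, s ∈ f ⁻¹' A → s ≠ ⊥ → ∃ p : S, p < s ∧ htS p = htT (h (f s)) := by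
    intro s hs hsb
    have h1 : h (f s) < f s := hreg (f s) hs (hfne s hsb)
    have h2 : htT (h (f s)) < htS s := by
      rw [← hf2 s]; exact hhtT.1 _ _ h1
    exact hhtS.2 s _ h2
  have hrex : ∀ s : S, ∃ p : S, s ∈ f ⁻¹' A → s ≠ ⊥ → p < s ∧ htS p = htT (h (f s)) := by
    intro s
    by_cases hc : s ∈ f ⁻¹' A ∧ s ≠ ⊥
    · obtain ⟨p, h1, h2⟩ := hrdef s hc.1 hc.2
      exact ⟨p, fun _ _ => ⟨h1, h2⟩⟩
    · exact ⟨⊥, fun h1 h2 => absurd ⟨h1, h2⟩ hc⟩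
  choose r hr using hrex
  refine ⟨r, ?_, ?_⟩
  · intro s hs hsb
    exact (hr s hs hsb).1
  · intro t
    obtain ⟨Aseq, hanti, hsub⟩ := hfib (f t)
    refine ⟨fun n => Nat.casesOn n {⊥} (fun m => f ⁻¹' (Aseq m)), ?_, ?_⟩
    · intro n
      cases n with
      | zero => exact Set.pairwise_singleton _ _
      | succ m => exact isAntichain_preimage hfmono (hanti m)
    · rintro s ⟨hsA, hst⟩
      by_cases hsb : s = ⊥
      · exact Set.mem_iUnion.2 ⟨0, by simp [hsb]⟩
      · obtain ⟨hps, hph⟩ := hr s hsA hsb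
        rw [hst] at hps hph
        have h1 : h (f s) < f s := hreg (f s) hsA (hfne s hsb)
        have h2 : h (f s) = f t := by
          refine below_uniq hchainT hhtT (le_of_lt h1) (le_of_lt (hfmono hps)) ?_
          rw [hf2, ← hph]
        have h3 : f s ∈ {y : T | y ∈ A ∧ h y = f t} := ⟨hsA, h2⟩
        obtain ⟨n, hn⟩ := Set.mem_iUnion.1 (hsub h3)
        exact Set.mem_iUnion.2 ⟨n + 1, hn⟩

/-- Two-universe wrapper: lift both height functions to a common universe. -/
lemma stmt6_main.{u, v} {S T : Type*} [PartialOrder S] [OrderBot S] [PartialOrder T] [OrderBot T]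
    (hchainS : PredsChain S) (htS : S → Ordinal.{u})
    (hhtS : IsHeightFun htS)
    (hchainT : PredsChain T) (htT : T → Ordinal.{v})
    (hhtT : IsHeightFun htT)
    (hle : ∃ g : S → T, StrictMono g) :
    ∃ f : S → T, ∀ A : Set T, InNS A → InNS (f ⁻¹' A) :=
  stmt6_core hchainS (fun s => Ordinal.lift.{v, u} (htS s)) (isHeightFun_lift hhtS)
    hchainT (fun t => Ordinal.lift.{u, v} (htT t)) (isHeightFun_lift hhtT) hle

/-- If `S` and `T` are trees of height `ω₁` with `S ≤ T`
(there is a strictly increasing map from `S` to `T`), then `NS^T ≤_K NS^S`: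
there is a map `f : S → T` such that `f ⁻¹' A ∈ NS^S` for every `A ∈ NS^T`. -/
theorem stmt6 {S T : Type*} [PartialOrder S] [OrderBot S] [PartialOrder T] [OrderBot T]
    (hchainS : PredsChain S) (htS : S → Ordinal)
    (hhtS : IsHeightFun htS) (hΩS : HeightOmega1 htS)
    (hchainT : PredsChain T) (htT : T → Ordinal)
    (hhtT : IsHeightFun htT) (hΩT : HeightOmega1 htT)
    (hle : ∃ g : S → T, StrictMono g) :
    ∃ f : S → T, ∀ A : Set T, InNS A → InNS (f ⁻¹' A) :=
  stmt6_main hchainS htS hhtS hchainT htT hhtT hle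
end

section
/- Let T be a nonspecial tree of height ω₁. If ◊_T holds, then 2^ℵ₀ ≤ |{t ∈ T : ht(t) ≥ ω}|. -/
open Set

/-- If `T` is a nonspecial tree of height `ω₁` and `◊_T` holds, then
`2 ^ ℵ₀ ≤ |{t ∈ T : ht t ≥ ω}|`. -/
theorem stmt9 {T : Type*} [PartialOrder T] [OrderBot T]
    (hchain : PredsChain T) (ht : T → Ordinal)
    (hht : IsHeightFun ht) (hΩ : HeightOmega1 ht)
    (hns : ¬ IsSpecialSet (Set.univ : Set T))
    (hd : DiamondTree T) :
    2 ^ Cardinal.aleph0 ≤ Cardinal.mk {t : T // Ordinal.omega0 ≤ ht t} := by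
  classical
  obtain ⟨D, hD1, hD2⟩ := hd
  have hsub : ∀ {U V : Set T}, U ⊆ V → IsSpecialSet V → IsSpecialSet U := by
    rintro U V hUV ⟨A, hA, hc⟩
    exact ⟨A, hA, hUV.trans hc⟩
  have hlow : IsSpecialSet {t : T | ht t < Ordinal.omega0} := by
    refine ⟨fun n => {t : T | ht t = (n : Ordinal)}, ?_, ?_⟩
    · intro n a ha b hb hab hle
      have hlt : a < b := lt_of_le_of_ne hle hab
      have := hht.1 a b hlt
      rw [ha, hb] at this
      exact lt_irrefl _ this
    · intro t htl
      obtain ⟨n, hn⟩ := Ordinal.lt_omega0.1 htl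
      exact Set.mem_iUnion.2 ⟨n, hn⟩
  have key : ∀ X : Set ℕ, ∃ t : T, Ordinal.omega0 ≤ ht t ∧
      {s : T | ∃ n ∈ X, ht s = (n : Ordinal)} ∩ Set.Iio t = D t := by
    intro X
    have hSns := hD2 {s : T | ∃ n ∈ X, ht s = (n : Ordinal)}
    by_contra h
    push_neg at h
    set S := {t : T | {s : T | ∃ n ∈ X, ht s = (n : Ordinal)} ∩ Set.Iio t = D t} with hS
    have hSsub : S ⊆ {t : T | ht t < Ordinal.omega0} := by
      intro t htS
      by_contra hlt
      exact h t (not_lt.1 hlt) htS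
    have hSsp : IsSpecialSet S := hsub hSsub hlow
    apply hSns
    refine ⟨fun _ => ⊥, fun t _ htne => htne.bot_lt, fun t => ?_⟩
    exact hsub (fun s hs => hs.1) hSsp
  choose tX h1 h2 using key
  have hinj : Function.Injective tX := by
    intro X X' hXX
    ext n
    have hn : (n : Ordinal) < ht (tX X) :=
      lt_of_lt_of_le (Ordinal.nat_lt_omega0 n) (h1 X)
    obtain ⟨s, hs, hsn⟩ := hht.2 (tX X) n hn
    have e2 := h2 X'
    rw [← hXX] at e2
    have hmem : s ∈ ({s : T | ∃ m ∈ X, ht s = (m : Ordinal)} ∩ Set.Iio (tX X)) ↔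
        s ∈ ({s : T | ∃ m ∈ X', ht s = (m : Ordinal)} ∩ Set.Iio (tX X)) := by
      rw [h2 X, e2]
    have l : ∀ Y : Set ℕ,
        (s ∈ {s : T | ∃ m ∈ Y, ht s = (m : Ordinal)} ∩ Set.Iio (tX X)) ↔ n ∈ Y := by
      intro Y
      constructor
      · rintro ⟨⟨m, hm, hem⟩, -⟩
        have hmn : (m : Ordinal) = (n : Ordinal) := by rw [← hem, hsn]
        exact (Nat.cast_injective hmn) ▸ hm
      · intro hnY
        exact ⟨⟨n, hnY, hsn⟩, hs⟩
    exact (l X).symm.trans (hmem.trans (l X'))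
  have hle : Cardinal.mk (ULift (Set ℕ)) ≤ Cardinal.mk {t : T // Ordinal.omega0 ≤ ht t} := by
    refine Cardinal.mk_le_of_injective
      (f := fun X : ULift (Set ℕ) => (⟨tX X.down, h1 X.down⟩ : {t : T // Ordinal.omega0 ≤ ht t})) ?_
    intro X X' hXX
    exact ULift.ext _ _ (hinj (congrArg Subtype.val hXX))
  have heq : Cardinal.mk (ULift (Set ℕ)) = 2 ^ Cardinal.aleph0 := by
    rw [Cardinal.mk_uLift, Cardinal.mk_set, Cardinal.mk_nat, Cardinal.lift_power,
      Cardinal.lift_two, Cardinal.lift_aleph0]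
  rw [← heq]
  exact hle
end

section
/- ◊_{2^{<ω₁}} holds (provably in ZFC): there is a family (D_t)_{t ∈ 2^{<ω₁}} with D_t ⊆ t↓ such that for every X ⊆ 2^{<ω₁} the set {t : X ∩ t↓ = D_t} does not belong to NS^{2^{<ω₁}}. -/
open Set

/-! ### The tree `2^{<ω₁}` -/

theorem omega1_pos : (0 : Ordinal) < omega1 := Ordinal.omega_pos 1

theorem omega1_isLimit : Order.IsSuccLimit omega1 := Cardinal.isSuccLimit_omega 1

/-- A node of the tree `2^{<ω₁}`: a function `s : α → 2` for some `α < ω₁`, coded as a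
function on all ordinals which takes the (junk) value `false` from `α` on. -/
structure BSeq : Type 1 where
  dom : Ordinal.{0}
  dom_lt : dom < omega1
  val : Ordinal.{0} → Bool
  val_eq_false : ∀ o : Ordinal.{0}, dom ≤ o → val o = false

/-- The extension order on `2^{<ω₁}`. -/
instance : PartialOrder BSeq where
  le s t := s.dom ≤ t.dom ∧ ∀ o : Ordinal, o < s.dom → s.val o = t.val o
  le_refl s := ⟨le_rfl, fun _ _ => rfl⟩
  le_trans s t u h h' :=
    ⟨h.1.trans h'.1, fun o ho => (h.2 o ho).trans (h'.2 o (lt_of_lt_of_le ho h.1))⟩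
  le_antisymm := by
    rintro ⟨d1, l1, v1, e1⟩ ⟨d2, l2, v2, e2⟩ ⟨hd, hv⟩ ⟨hd', hv'⟩
    obtain rfl : d1 = d2 := le_antisymm hd hd'
    obtain rfl : v1 = v2 := by
      funext o
      by_cases h : o < d1
      · exact hv o h
      · rw [e1 o (not_lt.1 h), e2 o (not_lt.1 h)]
    rfl

/-- The root of `2^{<ω₁}` is the empty function. -/
instance : OrderBot BSeq where
  bot := ⟨0, omega1_pos, fun _ => false, fun _ _ => rfl⟩
  bot_le t := ⟨by simp, fun o ho => absurd ho (by simp)⟩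

/-- The height of a node of `2^{<ω₁}` is its domain. -/
def BSeq.height (t : BSeq) : Ordinal.{0} := t.dom

/-- `t⌢b`, the extension of `t` by one value `b`. -/
noncomputable def BSeq.append (t : BSeq) (b : Bool) : BSeq where
  dom := t.dom + 1
  dom_lt := by
    rw [Ordinal.add_one_eq_succ]
    exact omega1_isLimit.succ_lt t.dom_lt
  val := fun o => if o < t.dom then t.val o else if o = t.dom then b else false
  val_eq_false := fun o ho => by
    have hdo : t.dom < o :=
      lt_of_lt_of_le (by rw [Ordinal.add_one_eq_succ]; exact Order.lt_succ t.dom) ho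
    show (if o < t.dom then t.val o else if o = t.dom then b else false) = false
    rw [if_neg (asymm hdo), if_neg hdo.ne']

/-! ### Auxiliary constructions -/

/-- Extensionality for `BSeq`. -/
theorem BSeq.ext' {s t : BSeq} (hd : s.dom = t.dom)
    (hv : ∀ o : Ordinal, o < s.dom → s.val o = t.val o) : s = t := by
  obtain ⟨d1, l1, v1, e1⟩ := s
  obtain ⟨d2, l2, v2, e2⟩ := t
  simp only at hd hv
  subst hd
  obtain rfl : v1 = v2 := by
    funext o
    by_cases h : o < d1
    · exact hv o h
    · rw [e1 o (not_lt.1 h), e2 o (not_lt.1 h)]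
  rfl

theorem BSeq.dom_lt_of_lt {s t : BSeq} (h : s < t) : s.dom < t.dom := by
  rcases lt_or_eq_of_le h.le.1 with h' | h'
  · exact h'
  · exact absurd (BSeq.ext' h' h.le.2) h.ne

open scoped Classical

/-- The characteristic branch of a set `X ⊆ 2^{<ω₁}`: at step `β` we put the bit `true`
iff the already-constructed initial segment of length `β` belongs to `X`. -/
noncomputable def bv (X : Set BSeq) : Ordinal.{0} → Bool :=
  Ordinal.lt_wf.fix fun β ih =>
    if h : β < omega1 then
      decide ((⟨β, h, fun o => if ho : o < β then ih o ho else false,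
        fun o hbo => dif_neg (not_lt.2 hbo)⟩ : BSeq) ∈ X)
    else false

/-- The node of length `β` on the characteristic branch of `X`. -/
noncomputable def seqX (X : Set BSeq) (β : Ordinal.{0}) (h : β < omega1) : BSeq :=
  ⟨β, h, fun o => if _ : o < β then bv X o else false,
    fun o hbo => dif_neg (not_lt.2 hbo)⟩

theorem bv_eq (X : Set BSeq) {β : Ordinal.{0}} (h : β < omega1) :
    bv X β = decide (seqX X β h ∈ X) := by
  show Ordinal.lt_wf.fix _ β = _
  rw [WellFounded.fix_eq]
  rw [dif_pos h]
  rfl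

theorem seqX_le (X : Set BSeq) {β γ : Ordinal.{0}} (hβ : β < omega1) (hγ : γ < omega1)
    (h : β ≤ γ) : seqX X β hβ ≤ seqX X γ hγ := by
  refine ⟨h, fun o ho => ?_⟩
  have ho' : o < β := ho
  show (if _ : o < β then bv X o else false) = (if _ : o < γ then bv X o else false)
  rw [dif_pos ho', dif_pos (ho'.trans_le h)]

theorem seqX_dom (X : Set BSeq) {β : Ordinal.{0}} (hβ : β < omega1) :
    (seqX X β hβ).dom = β := rfl

theorem seqX_inj (X : Set BSeq) {β γ : Ordinal.{0}} (hβ : β < omega1) (hγ : γ < omega1)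
    (h : seqX X β hβ = seqX X γ hγ) : β = γ := congrArg BSeq.dom h

/-- Every strict predecessor of a node on the characteristic branch is itself on the branch. -/
theorem pred_seqX (X : Set BSeq) {γ : Ordinal.{0}} (hγ : γ < omega1) {s : BSeq}
    (hs : s < seqX X γ hγ) :
    s.dom < γ ∧ s = seqX X s.dom ((BSeq.dom_lt_of_lt hs).trans hγ) := by
  have hd : s.dom < γ := BSeq.dom_lt_of_lt hs
  refine ⟨hd, BSeq.ext' rfl fun o ho => ?_⟩
  have h1 : s.val o = (seqX X γ hγ).val o := hs.le.2 o ho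
  have h2 : (seqX X γ hγ).val o = bv X o := dif_pos (ho.trans hd)
  have h3 : (seqX X s.dom ((BSeq.dom_lt_of_lt hs).trans hγ)).val o = bv X o := dif_pos ho
  rw [h1, h2, h3]

/-- An uncountable set of ordinals indexing a chain which is covered by countably many
antichains must be countable. -/
theorem chain_special_countable {ι : Set Ordinal.{0}} {e : Ordinal → BSeq}
    (hmono : ∀ β ∈ ι, ∀ γ ∈ ι, β ≤ γ → e β ≤ e γ)
    (hinj : ∀ β ∈ ι, ∀ γ ∈ ι, e β = e γ → β = γ)
    (hsp : IsSpecialSet (e '' ι)) : ι.Countable := by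
  obtain ⟨A, hA, hsub⟩ := hsp
  have : ι ⊆ ⋃ n : ℕ, {β ∈ ι | e β ∈ A n} := by
    intro β hβ
    have : e β ∈ ⋃ n, A n := hsub ⟨β, hβ, rfl⟩
    obtain ⟨n, hn⟩ := Set.mem_iUnion.1 this
    exact Set.mem_iUnion.2 ⟨n, hβ, hn⟩
  refine Set.Countable.mono this (Set.countable_iUnion fun n => Set.Subsingleton.countable ?_)
  intro β hβ γ hγ
  by_contra hne
  rcases le_total β γ with h | h
  · exact hA n hβ.2 hγ.2 (fun he => hne (hinj β hβ.1 γ hγ.1 he))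
      (hmono β hβ.1 γ hγ.1 h)
  · exact hA n hγ.2 hβ.2 (fun he => hne (hinj β hβ.1 γ hγ.1 he.symm))
      (hmono γ hγ.1 β hβ.1 h)

theorem Iio_omega1_uncountable : ¬ (Set.Iio omega1).Countable := by
  intro h
  have h2 := h.le_aleph0
  rw [Ordinal.mk_Iio_ordinal, Cardinal.lift_le_aleph0] at h2
  unfold omega1 at h2
  rw [Ordinal.card_omega] at h2
  exact absurd h2 (not_le.2 Cardinal.aleph0_lt_aleph_one)

/-- `◊_{2^{<ω₁}}` holds (provably in ZFC): there is a family
`(D_t)_{t ∈ 2^{<ω₁}}` with `D_t ⊆ t↓` such that for every `X ⊆ 2^{<ω₁}` the set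
`{t : X ∩ t↓ = D_t}` does not belong to `NS^{2^{<ω₁}}`. -/
theorem stmt12 : DiamondTree BSeq := by
  classical
  refine ⟨fun t => {s | s < t ∧ t.val s.dom = true}, fun t s hs => hs.1, ?_⟩
  intro X hNS
  obtain ⟨f, hreg, hfib⟩ := hNS
  -- every node on the characteristic branch of `X` guesses `X`
  have hguess : ∀ γ : Ordinal.{0}, ∀ hγ : γ < omega1,
      X ∩ Set.Iio (seqX X γ hγ) =
        {s | s < seqX X γ hγ ∧ (seqX X γ hγ).val s.dom = true} := by
    intro γ hγ
    ext s
    simp only [Set.mem_inter_iff, Set.mem_Iio, Set.mem_setOf_eq]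
    constructor
    · rintro ⟨hX, hlt⟩
      refine ⟨hlt, ?_⟩
      obtain ⟨hd, hs⟩ := pred_seqX X hγ hlt
      have hv : (seqX X γ hγ).val s.dom = bv X s.dom := dif_pos hd
      rw [hv, bv_eq X ((BSeq.dom_lt_of_lt hlt).trans hγ), decide_eq_true_eq]
      exact hs ▸ hX
    · rintro ⟨hlt, hval⟩
      refine ⟨?_, hlt⟩
      obtain ⟨hd, hs⟩ := pred_seqX X hγ hlt
      have hv : (seqX X γ hγ).val s.dom = bv X s.dom := dif_pos hd
      rw [hv, bv_eq X ((BSeq.dom_lt_of_lt hlt).trans hγ), decide_eq_true_eq] at hval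
      exact hs ▸ hval
  -- the totalized characteristic branch
  set e : Ordinal.{0} → BSeq := fun β => if h : β < omega1 then seqX X β h else ⊥ with he_def
  have he : ∀ β (h : β < omega1), e β = seqX X β h := fun β h => dif_pos h
  -- the regressive trace on ordinals
  set g : Ordinal.{0} → Ordinal.{0} := fun γ => (f (e γ)).dom with hg_def
  have hfe : ∀ γ, γ < omega1 → γ ≠ 0 → g γ < γ ∧ f (e γ) = e (g γ) := by
    intro γ hγ hne
    have hbot : e γ ≠ ⊥ := by
      rw [he γ hγ]
      intro h
      exact hne (congrArg BSeq.dom h)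
    have hmem : e γ ∈ {t : BSeq | X ∩ Set.Iio t = {s | s < t ∧ t.val s.dom = true}} := by
      rw [he γ hγ]; exact hguess γ hγ
    have hlt : f (e γ) < seqX X γ hγ := by
      rw [← he γ hγ]; exact hreg _ hmem hbot
    obtain ⟨hd, hs⟩ := pred_seqX X hγ hlt
    refine ⟨hd, ?_⟩
    rw [he (g γ) (hd.trans hγ)]
    exact hs
  -- fibers, traced on the branch
  have hS : ∀ β : Ordinal.{0},
      {γ : Ordinal.{0} | γ < omega1 ∧ γ ≠ 0 ∧ g γ = β}.Countable := by
    intro β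
    refine chain_special_countable (e := e) ?_ ?_ ?_
    · intro γ₁ h₁ γ₂ h₂ hle
      rw [he γ₁ h₁.1, he γ₂ h₂.1]
      exact seqX_le X h₁.1 h₂.1 hle
    · intro γ₁ h₁ γ₂ h₂ heq
      have : (e γ₁).dom = (e γ₂).dom := congrArg BSeq.dom heq
      rwa [he γ₁ h₁.1, he γ₂ h₂.1] at this
    · obtain ⟨A, hA, hsub⟩ := hfib (e β)
      refine ⟨A, hA, ?_⟩
      rintro _ ⟨γ, hγ, rfl⟩
      apply hsub
      constructor
      · rw [he γ hγ.1]; exact hguess γ hγ.1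
      · rw [(hfe γ hγ.1 hγ.2.1).2, hγ.2.2]
  -- reachability sets
  set R : ℕ → Set Ordinal.{0} := fun n =>
    Nat.rec {0} (fun _ Rn => Rn ∪ ⋃ β ∈ Rn, {γ | γ < omega1 ∧ γ ≠ 0 ∧ g γ = β}) n with hR_def
  have hRc : ∀ n, (R n).Countable := by
    intro n
    induction n with
    | zero => exact Set.countable_singleton 0
    | succ n ih => exact ih.union (ih.biUnion fun β _ => hS β)
  have hall : ∀ γ : Ordinal.{0}, γ < omega1 → ∃ n, γ ∈ R n := by
    intro γ
    induction γ using Ordinal.induction with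
    | h γ IH =>
      intro hγ
      rcases eq_or_ne γ 0 with rfl | hne
      · exact ⟨0, rfl⟩
      · obtain ⟨hlt, -⟩ := hfe γ hγ hne
        obtain ⟨n, hn⟩ := IH (g γ) hlt (hlt.trans hγ)
        exact ⟨n + 1, Or.inr (Set.mem_biUnion hn ⟨hγ, hne, rfl⟩)⟩
  apply Iio_omega1_uncountable
  refine (Set.countable_iUnion hRc).mono ?_
  intro γ hγ
  obtain ⟨n, hn⟩ := hall γ hγ
  exact Set.mem_iUnion.2 ⟨n, hn⟩
end
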